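/- For any finite simple graph G on n vertices, the independence number α(G) is at most the Lovász theta number ϑ(G). -/

import Mathlib

open scoped BigOperators
open Matrix

/-- The Lovász theta number of a graph `G` on `n` vertices. -/
noncomputable def lovaszTheta {n : ℕ} (G : SimpleGraph (Fin n)) : ℝ :=
  sSup {t : ℝ | ∃ X : Matrix (Fin n) (Fin n) ℝ, X.PosSemidef ∧
    X.trace = 1 ∧ (∀ i j, G.Adj i j → X i j = 0) ∧ t = ∑ i, ∑ j, X i j}

lemma psd_entry {n : ℕ} {X : Matrix (Fin n) (Fin n) ℝ} (hX : X.PosSemidef) (i j : Fin n) :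
    2 * X i j ≤ X i i + X j j := by
  have h := hX.dotProduct_mulVec_nonneg (Pi.single i 1 - Pi.single j 1)
  have hs : X j i = X i j := by
    have h1 := hX.1
    rw [Matrix.IsHermitian] at h1
    have := congrFun (congrFun h1 i) j
    simpa [Matrix.conjTranspose_apply] using this
  simp only [star_trivial, Matrix.mulVec_sub, Matrix.mulVec_single, dotProduct_sub,
    sub_dotProduct, Pi.single_apply, dotProduct, Pi.sub_apply, mul_one,
    one_mul, sub_mul, mul_ite, mul_zero, ite_mul, zero_mul, Finset.sum_sub_distrib,
    Finset.sum_ite_eq', Finset.mem_univ, if_true] at h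
  simp only [MulOpposite.op_one, one_smul, Matrix.col_apply] at h
  nlinarith [h, hs]

lemma sum_bound {n : ℕ} {X : Matrix (Fin n) (Fin n) ℝ} (hX : X.PosSemidef)
    (ht : X.trace = 1) : ∑ i, ∑ j, X i j ≤ n := by
  have htr : ∑ i, X i i = 1 := ht
  have h : ∀ i j, X i j ≤ (X i i + X j j) / 2 := fun i j => by
    have := psd_entry hX i j; linarith
  calc ∑ i, ∑ j, X i j ≤ ∑ i : Fin n, ∑ j : Fin n, (X i i + X j j) / 2 :=
        Finset.sum_le_sum fun i _ => Finset.sum_le_sum fun j _ => h i j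
    _ = n := by
        have h2 : ∀ i : Fin n, ∑ j : Fin n, (X i i + X j j) / 2 = (n * X i i + 1) / 2 := by
          intro i
          rw [← Finset.sum_div, Finset.sum_add_distrib, Finset.sum_const, htr]
          simp [Finset.card_univ, nsmul_eq_mul]
        rw [Finset.sum_congr rfl fun i _ => h2 i, ← Finset.sum_div, Finset.sum_add_distrib,
          ← Finset.mul_sum, htr, Finset.sum_const]
        simp [Finset.card_univ, nsmul_eq_mul]

lemma bddAbove_theta {n : ℕ} (G : SimpleGraph (Fin n)) :
    BddAbove {t : ℝ | ∃ X : Matrix (Fin n) (Fin n) ℝ, X.PosSemidef ∧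
      X.trace = 1 ∧ (∀ i j, G.Adj i j → X i j = 0) ∧ t = ∑ i, ∑ j, X i j} := by
  refine ⟨n, fun t ht => ?_⟩
  obtain ⟨X, hX, htr, -, rfl⟩ := ht
  exact sum_bound hX htr

lemma mem_theta {n : ℕ} (G : SimpleGraph (Fin n)) (s : Finset (Fin n)) (hs : s.Nonempty)
    (hind : ∀ i ∈ s, ∀ j ∈ s, i ≠ j → ¬ G.Adj i j) :
    (s.card : ℝ) ∈ {t : ℝ | ∃ X : Matrix (Fin n) (Fin n) ℝ, X.PosSemidef ∧
      X.trace = 1 ∧ (∀ i j, G.Adj i j → X i j = 0) ∧ t = ∑ i, ∑ j, X i j} := by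
  have hcard : (0:ℝ) < s.card := by exact_mod_cast Finset.card_pos.mpr hs
  set c : ℝ := (s.card : ℝ)⁻¹ with hc
  have hc0 : 0 ≤ c := by positivity
  set X : Matrix (Fin n) (Fin n) ℝ :=
    Matrix.of fun i j => c * (if i ∈ s then (1:ℝ) else 0) * (if j ∈ s then 1 else 0) with hXdef
  refine ⟨X, ?_, ?_, ?_, ?_⟩
  · have : X = (Matrix.of fun (_ : Fin 1) j => Real.sqrt c * (if j ∈ s then (1:ℝ) else 0))ᴴ *
        (Matrix.of fun (_ : Fin 1) j => Real.sqrt c * (if j ∈ s then (1:ℝ) else 0)) := by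
      ext i j
      simp only [hXdef, Matrix.mul_apply, Matrix.conjTranspose_apply, Matrix.of_apply,
        star_trivial, Fin.sum_univ_one]
      by_cases hi : i ∈ s <;> by_cases hj : j ∈ s <;>
        simp [hi, hj, Real.mul_self_sqrt hc0]
    rw [this]
    exact Matrix.posSemidef_conjTranspose_mul_self _
  · show ∑ i, X i i = 1
    have : ∀ i : Fin n, X i i = if i ∈ s then c else 0 := by
      intro i; by_cases h : i ∈ s <;> simp [hXdef, h]
    rw [Finset.sum_congr rfl fun i _ => this i, Finset.sum_ite_mem,
      Finset.univ_inter, Finset.sum_const, nsmul_eq_mul, hc]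
    field_simp
  · intro i j hadj
    by_cases hi : i ∈ s
    · by_cases hj : j ∈ s
      · exact absurd hadj (hind i hi j hj (G.ne_of_adj hadj))
      · simp [hXdef, hj]
    · simp [hXdef, hi]
  · have : ∀ i : Fin n, ∑ j, X i j = if i ∈ s then c * s.card else 0 := by
      intro i
      have h1 : ∀ j : Fin n, X i j = if j ∈ s then (if i ∈ s then c else 0) else 0 := by
        intro j; by_cases hi : i ∈ s <;> by_cases hj : j ∈ s <;> simp [hXdef, hi, hj]
      rw [Finset.sum_congr rfl fun j _ => h1 j, Finset.sum_ite_mem, Finset.univ_inter,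
        Finset.sum_const, nsmul_eq_mul]
      by_cases hi : i ∈ s <;> simp [hi, mul_comm]
    rw [Finset.sum_congr rfl fun i _ => this i, Finset.sum_ite_mem, Finset.univ_inter,
      Finset.sum_const, nsmul_eq_mul, hc]
    field_simp

/-- The independence number is at most the Lovász theta number. -/
theorem indepNum_le_lovaszTheta {n : ℕ} (G : SimpleGraph (Fin n)) :
    ∀ s : Finset (Fin n), (∀ i ∈ s, ∀ j ∈ s, i ≠ j → ¬ G.Adj i j) →
      (s.card : ℝ) ≤ lovaszTheta G := by
  intro s hind
  rcases s.eq_empty_or_nonempty with rfl | hs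
  · simp only [Finset.card_empty, Nat.cast_zero]
    rcases Nat.eq_zero_or_pos n with rfl | hn
    · have : {t : ℝ | ∃ X : Matrix (Fin 0) (Fin 0) ℝ, X.PosSemidef ∧
        X.trace = 1 ∧ (∀ i j, G.Adj i j → X i j = 0) ∧ t = ∑ i, ∑ j, X i j} = ∅ := by
        ext t
        simp only [Set.mem_setOf_eq, Set.mem_empty_iff_false, iff_false, not_exists]
        rintro X ⟨_, htr, _⟩
        simp [Matrix.trace] at htr
      rw [lovaszTheta, this, Real.sSup_empty]
    · have h1 := mem_theta G {⟨0, hn⟩} ⟨_, Finset.mem_singleton_self _⟩ (by simp)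
      calc (0:ℝ) ≤ 1 := zero_le_one
        _ ≤ lovaszTheta G := le_csSup (bddAbove_theta G) (by simpa using h1)
  · exact le_csSup (bddAbove_theta G) (mem_theta G s hs hind)
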